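/- Let (L,Δ,S) be a locality, K a partial normal subgroup with T = S ∩ K, and R a subgroup of S. Then the full preimage of R̄ under the quotient map ρ : L → L/K equals KR, i.e. {f ∈ L : f̄ ∈ R̄} = KR = {Π(k,r) : k ∈ K, r ∈ R, (k,r) ∈ D}. -/

import Mathlib

universe u v w

/-- A partial group in the sense of Chermak: a set `L` with a set `D` of words,
a (total, but only meaningful on `D`) product `prod`, and an involutory inversion. -/
structure PartialGroup (L : Type u) where
  D : Set (List L)
  prod : List L → L
  inv : L → L
  nil_mem : ([] : List L) ∈ D
  single_mem : ∀ f : L, [f] ∈ D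
  append_closed : ∀ u v : List L, u ++ v ∈ D → u ∈ D ∧ v ∈ D
  prod_single : ∀ f : L, prod [f] = f
  prod_assoc : ∀ u v w : List L, u ++ v ++ w ∈ D →
    (u ++ [prod v] ++ w ∈ D ∧ prod (u ++ v ++ w) = prod (u ++ [prod v] ++ w))
  inv_inv : ∀ f : L, inv (inv f) = f
  inv_word_mem : ∀ u ∈ D, (u.reverse.map inv) ++ u ∈ D
  prod_inv_word : ∀ u ∈ D, prod ((u.reverse.map inv) ++ u) = prod []

namespace PartialGroup

variable {L : Type u} (PG : PartialGroup L)

/-- The identity element `1 = Π(∅)`. -/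
def one : L := PG.prod []

/-- Conjugation `x^g = Π(g⁻¹, x, g)` (only meaningful when `(g⁻¹,x,g) ∈ D`). -/
def conj (g x : L) : L := PG.prod [PG.inv g, x, g]

/-- `D(g)`: the set of `x` for which conjugation by `g` is defined. -/
def Dset (g : L) : Set L := {x | [PG.inv g, x, g] ∈ PG.D}

/-- `P^g`, the image of a subset under conjugation by `g`. -/
def conjSet (g : L) (P : Set L) : Set L := PG.conj g '' P

/-- A partial subgroup: nonempty, closed under inversion and under defined products. -/
def IsPartialSubgroup (H : Set L) : Prop :=
  H.Nonempty ∧ (∀ h ∈ H, PG.inv h ∈ H) ∧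
    ∀ v ∈ PG.D, (∀ x ∈ v, x ∈ H) → PG.prod v ∈ H

/-- A partial normal subgroup: a partial subgroup closed under defined conjugation. -/
def IsPartialNormal (N : Set L) : Prop :=
  PG.IsPartialSubgroup N ∧ ∀ x ∈ N, ∀ f : L, x ∈ PG.Dset f → PG.conj f x ∈ N

/-- A subgroup of a partial group: a partial subgroup all of whose words lie in `D`. -/
def IsSubgroup (H : Set L) : Prop :=
  PG.IsPartialSubgroup H ∧ ∀ w : List L, (∀ x ∈ w, x ∈ H) → w ∈ PG.D

/-- A `p`-subgroup: a subgroup of `p`-power order. -/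
def IsPSubgroup (p : ℕ) (H : Set L) : Prop :=
  PG.IsSubgroup H ∧ ∃ k : ℕ, Nat.card H = p ^ k

/-- The product `MN = {Π(m,n) : m ∈ M, n ∈ N, (m,n) ∈ D}` of two subsets. -/
def setProd (M N : Set L) : Set L :=
  {z | ∃ m ∈ M, ∃ n ∈ N, [m, n] ∈ PG.D ∧ z = PG.prod [m, n]}

/-- The product `N₁N₂⋯N_l` of a family of subsets. -/
def multiProd {l : ℕ} (N : Fin l → Set L) : Set L :=
  {z | ∃ n : Fin l → L, List.ofFn n ∈ PG.D ∧ (∀ i, n i ∈ N i) ∧ z = PG.prod (List.ofFn n)}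

/-- A word is in `D` via a chain of groups from `Δ`. -/
def InDVia (Δ : Set (Set L)) (wrd : List L) : Prop :=
  ∃ P : Fin (wrd.length + 1) → Set L, (∀ i, P i ∈ Δ) ∧
    ∀ i : Fin wrd.length,
      P i.castSucc ⊆ PG.Dset (wrd.get i) ∧ PG.conjSet (wrd.get i) (P i.castSucc) = P i.succ

/-- `S_g = {s ∈ S : (g⁻¹,s,g) ∈ D and s^g ∈ S}`. -/
def Sg (S : Set L) (g : L) : Set L :=
  {s ∈ S | s ∈ PG.Dset g ∧ PG.conj g s ∈ S}

/-- `S_w` for a word `w = (g₁,…,gₙ)`: those `s ∈ S` admitting a chain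
`s = x₀, x₁, …, xₙ ∈ S` with `x_{i-1}^{g_i} = x_i`. -/
def Sw (S : Set L) (wrd : List L) : Set L :=
  {s ∈ S | ∃ x : Fin (wrd.length + 1) → L, (∀ i, x i ∈ S) ∧ x 0 = s ∧
    ∀ i : Fin wrd.length,
      x i.castSucc ∈ PG.Dset (wrd.get i) ∧ PG.conj (wrd.get i) (x i.castSucc) = x i.succ}

/-- The (right) coset `Kf = {kf : k ∈ K, (k,f) ∈ D}`. -/
def coset (K : Set L) (f : L) : Set L :=
  {z | ∃ k ∈ K, [k, f] ∈ PG.D ∧ z = PG.prod [k, f]}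

/-- A maximal coset of `K`: a coset maximal under inclusion among cosets of `K`. -/
def IsMaxCoset (K C : Set L) : Prop :=
  (∃ f, C = PG.coset K f) ∧ ∀ g : L, C ⊆ PG.coset K g → C = PG.coset K g

/-- `f` and `g` lie in a common maximal coset of `K`, i.e. `f̄ = ḡ` in `L/K`. -/
def SameMaxCoset (K : Set L) (f g : L) : Prop :=
  ∃ C, PG.IsMaxCoset K C ∧ f ∈ C ∧ g ∈ C

/-- `N_K(P,Q) = {x ∈ K : P ⊆ D(x), P^x ≤ Q}`. -/
def NBetween (K P Q : Set L) : Set L :=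
  {x ∈ K | P ⊆ PG.Dset x ∧ PG.conjSet x P ⊆ Q}

/-- The normalizer `N_A(R) = {a ∈ A : R ⊆ D(a), R^a = R}`. -/
def NIn (A R : Set L) : Set L :=
  {a ∈ A | R ⊆ PG.Dset a ∧ PG.conjSet a R = R}

end PartialGroup

/-- A locality `(L, Δ, S)` in the sense of Chermak. -/
structure Locality (L : Type u) extends PartialGroup L where
  finite : Finite L
  p : ℕ
  p_prime : p.Prime
  S : Set L
  Δ : Set (Set L)
  Δ_nonempty : Δ.Nonempty
  Δ_subgroups : ∀ P ∈ Δ, P ⊆ S ∧ toPartialGroup.IsSubgroup P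
  L1 : toPartialGroup.IsPSubgroup p S ∧
    ∀ T : Set L, toPartialGroup.IsPSubgroup p T → S ⊆ T → S = T
  L2 : ∀ wrd : List L, wrd ∈ toPartialGroup.D ↔ toPartialGroup.InDVia Δ wrd
  L3 : ∀ Q : Set L, Q ⊆ S → toPartialGroup.IsSubgroup Q →
    (∃ P ∈ Δ, ∃ g : L, P ⊆ toPartialGroup.Dset g ∧ toPartialGroup.conjSet g P ⊆ Q) → Q ∈ Δ

namespace Locality

variable {L : Type u} (Loc : Locality L)

/-- `S_g` for the locality. -/
def Sg (g : L) : Set L := Loc.toPartialGroup.Sg Loc.S g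

/-- `S_w` for the locality. -/
def Sw (wrd : List L) : Set L := Loc.toPartialGroup.Sw Loc.S wrd

/-- The domain `L∘Δ` of the relation `↑_K`: pairs `(f,P)` with `P ∈ Δ` and `P ≤ S_f`. -/
def LDelta : Set (L × Set L) := {fP | fP.2 ∈ Loc.Δ ∧ fP.2 ⊆ Loc.Sg fP.1}

/-- Chermak's relation `↑_K` on `L∘Δ`: `(f,P) ↑_K (g,Q)` iff there are
`x ∈ N_K(P,Q)` and `y ∈ N_K(P^f,Q^g)` with `xg = fy`. -/
def UpRel (K : Set L) (fP gQ : L × Set L) : Prop :=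
  ∃ x ∈ Loc.toPartialGroup.NBetween K fP.2 gQ.2,
    ∃ y ∈ Loc.toPartialGroup.NBetween K
        (Loc.toPartialGroup.conjSet fP.1 fP.2) (Loc.toPartialGroup.conjSet gQ.1 gQ.2),
      [x, gQ.1] ∈ Loc.toPartialGroup.D ∧ [fP.1, y] ∈ Loc.toPartialGroup.D ∧
        Loc.toPartialGroup.prod [x, gQ.1] = Loc.toPartialGroup.prod [fP.1, y]

/-- `f` is `↑_K`-maximal. -/
def UpMaximal (K : Set L) (f : L) : Prop :=
  ∀ gQ ∈ Loc.LDelta, Loc.UpRel K (f, Loc.Sg f) gQ → Loc.UpRel K gQ (f, Loc.Sg f)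

end Locality

/-- `ρ : L → L'` realizes `Loc'` as the quotient locality `L/K`:
it is a surjective homomorphism of partial groups with kernel `K`, whose fibers
are the maximal cosets of `K`, and with `D̄ = Dρ*`, `S̄ = Sρ`, `Δ̄ = {P̄ : P ∈ Δ}`. -/
structure IsQuotientMap {L : Type u} {L' : Type v} (Loc : Locality L) (K : Set L)
    (Loc' : Locality L') (ρ : L → L') : Prop where
  surj : Function.Surjective ρ
  D_eq : Loc'.D = (fun wrd : List L => wrd.map ρ) '' Loc.D
  hom : ∀ wrd ∈ Loc.D, Loc'.toPartialGroup.prod (wrd.map ρ) = ρ (Loc.toPartialGroup.prod wrd)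
  ker : ∀ f : L, ρ f = ρ Loc.toPartialGroup.one ↔ f ∈ K
  fiber : ∀ f g : L, ρ f = ρ g ↔ Loc.toPartialGroup.SameMaxCoset K f g
  S_eq : Loc'.S = ρ '' Loc.S
  Δ_eq : Loc'.Δ = (fun P : Set L => ρ '' P) '' Loc.Δ
  p_eq : Loc'.p = Loc.p

/-! ### Auxiliary word-calculus lemmas for partial groups -/

namespace PartialGroup

variable {L : Type u} (PG : PartialGroup L)

lemma one_cons (a : L) : [PG.one, a] ∈ PG.D ∧ PG.prod [PG.one, a] = a := by
  have h := PG.prod_assoc [] [] [a] (PG.single_mem a)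
  refine ⟨by simpa [PartialGroup.one] using h.1, ?_⟩
  have := h.2
  simp only [List.nil_append, List.append_nil, List.cons_append] at this
  rw [PG.prod_single] at this
  exact this.symm

lemma cons_one (a : L) : [a, PG.one] ∈ PG.D ∧ PG.prod [a, PG.one] = a := by
  have h := PG.prod_assoc [a] [] [] (PG.single_mem a)
  refine ⟨by simpa [PartialGroup.one] using h.1, ?_⟩
  have := h.2
  simp only [List.nil_append, List.append_nil, List.cons_append] at this
  rw [PG.prod_single] at this
  exact this.symm

lemma bar_mem {u : List L} (hu : u ∈ PG.D) : u.reverse.map PG.inv ∈ PG.D :=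
  (PG.append_closed _ _ (PG.inv_word_mem u hu)).1

lemma barbar (u : List L) : ((u.reverse.map PG.inv).reverse.map PG.inv) = u := by
  have hii : ∀ x, PG.inv (PG.inv x) = x := PG.inv_inv
  simp [List.map_reverse, List.map_map, Function.comp_def, hii]

lemma append_bar_mem {u : List L} (hu : u ∈ PG.D) :
    u ++ u.reverse.map PG.inv ∈ PG.D ∧ PG.prod (u ++ u.reverse.map PG.inv) = PG.one := by
  have hv : u.reverse.map PG.inv ∈ PG.D := PG.bar_mem hu
  have h1 := PG.inv_word_mem _ hv
  have h2 := PG.prod_inv_word _ hv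
  rw [PG.barbar] at h1 h2
  exact ⟨h1, h2⟩

lemma inv_self (a : L) : [PG.inv a, a] ∈ PG.D ∧ PG.prod [PG.inv a, a] = PG.one := by
  have h1 := PG.inv_word_mem [a] (PG.single_mem a)
  have h2 := PG.prod_inv_word [a] (PG.single_mem a)
  simp only [List.reverse_singleton, List.map] at h1 h2
  exact ⟨h1, h2⟩

lemma self_inv (a : L) : [a, PG.inv a] ∈ PG.D ∧ PG.prod [a, PG.inv a] = PG.one := by
  have h := PG.append_bar_mem (PG.single_mem a)
  simp only [List.reverse_singleton, List.map] at h
  exact h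

lemma split_prod {u v : List L} (h : u ++ v ∈ PG.D) :
    [PG.prod u, PG.prod v] ∈ PG.D ∧ PG.prod (u ++ v) = PG.prod [PG.prod u, PG.prod v] := by
  have h0 : u ++ v ++ ([] : List L) ∈ PG.D := by simpa using h
  have h1 := PG.prod_assoc u v [] h0
  have h2 : ([] : List L) ++ u ++ [PG.prod v] ∈ PG.D := by simpa using h1.1
  have h3 := PG.prod_assoc [] u [PG.prod v] h2
  constructor
  · simpa using h3.1
  · have e1 : PG.prod (u ++ v) = PG.prod (u ++ [PG.prod v]) := by simpa using h1.2
    have e2 : PG.prod (u ++ [PG.prod v]) = PG.prod [PG.prod u, PG.prod v] := by simpa using h3.2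
    exact e1.trans e2

lemma left_cancel {a b : L} (h : [a, b] ∈ PG.D) :
    [PG.inv a, PG.prod [a, b]] ∈ PG.D ∧ PG.prod [PG.inv a, PG.prod [a, b]] = b := by
  have h1 := PG.inv_word_mem [a, b] h
  simp only [List.reverse_cons, List.reverse_nil, List.nil_append, List.cons_append,
    List.map] at h1
  -- h1 : [b⁻¹, a⁻¹, a, b] ∈ D
  have h2 : [PG.inv a, a, b] ∈ PG.D := (PG.append_closed [PG.inv b] [PG.inv a, a, b] h1).2
  have h3 := PG.prod_assoc [] [PG.inv a, a] [b] (by simpa using h2)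
  have h4 := PG.prod_assoc [PG.inv a] [a, b] [] (by simpa using h2)
  have e0 : PG.prod [PG.inv a, a] = PG.one := (PG.inv_self a).2
  constructor
  · simpa using h4.1
  · have e1 : PG.prod [PG.inv a, a, b] = PG.prod [PG.prod [PG.inv a, a], b] := by simpa using h3.2
    have e2 : PG.prod [PG.inv a, a, b] = PG.prod [PG.inv a, PG.prod [a, b]] := by simpa using h4.2
    rw [e0] at e1
    rw [← e2, e1, (PG.one_cons b).2]

lemma eq_inv_of_prod_one {a b : L} (h : [a, b] ∈ PG.D) (h1 : PG.prod [a, b] = PG.one) :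
    b = PG.inv a := by
  have h2 := PG.left_cancel h
  rw [h1] at h2
  rw [← h2.2, (PG.cons_one (PG.inv a)).2]

lemma inv_prod {u : List L} (hu : u ∈ PG.D) :
    PG.inv (PG.prod u) = PG.prod (u.reverse.map PG.inv) := by
  have h1 := PG.append_bar_mem hu
  have h2 := PG.split_prod h1.1
  have h3 : PG.prod [PG.prod u, PG.prod (u.reverse.map PG.inv)] = PG.one := by
    rw [← h2.2]; exact h1.2
  exact (PG.eq_inv_of_prod_one h2.1 h3).symm

lemma one_mem_of_partialSub {K : Set L} (hK : PG.IsPartialSubgroup K) : PG.one ∈ K :=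
  hK.2.2 [] PG.nil_mem (by simp)

end PartialGroup

lemma list_map_surj {α : Type u} {β : Type v} (f : α → β) (P : Set α) :
    ∀ v : List β, (∀ z ∈ v, z ∈ f '' P) →
      ∃ xs : List α, (∀ x ∈ xs, x ∈ P) ∧ v = xs.map f := by
  intro v
  induction v with
  | nil => exact fun _ => ⟨[], by simp, rfl⟩
  | cons z v ihv =>
    intro hv
    obtain ⟨xs, hxs, rfl⟩ := ihv fun x hx => hv x (List.mem_cons_of_mem _ hx)
    obtain ⟨x0, hx0, rfl⟩ := hv z (by simp)
    exact ⟨x0 :: xs, by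
      intro x hx
      rcases List.mem_cons.mp hx with rfl | h
      · exact hx0
      · exact hxs x h, by simp⟩

/-! ### Auxiliary lemmas for localities -/

namespace Locality

variable {L : Type u} (Loc : Locality L)

lemma S_isSubgroup : Loc.toPartialGroup.IsSubgroup Loc.S := Loc.L1.1.1

lemma S_word_mem {w : List L} (hw : ∀ x ∈ w, x ∈ Loc.S) : w ∈ Loc.toPartialGroup.D :=
  Loc.S_isSubgroup.2 w hw

lemma S_prod_mem {w : List L} (hw : ∀ x ∈ w, x ∈ Loc.S) :
    Loc.toPartialGroup.prod w ∈ Loc.S :=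
  Loc.S_isSubgroup.1.2.2 w (Loc.S_word_mem hw) hw

lemma S_inv_mem {s : L} (hs : s ∈ Loc.S) : Loc.toPartialGroup.inv s ∈ Loc.S :=
  Loc.S_isSubgroup.1.2.1 s hs

lemma conj_mem_S {s x : L} (hs : s ∈ Loc.S) (hx : x ∈ Loc.S) :
    Loc.toPartialGroup.conj s x ∈ Loc.S := by
  apply Loc.S_prod_mem
  intro z hz
  simp only [List.mem_cons, List.not_mem_nil, or_false] at hz
  rcases hz with rfl | rfl | rfl
  · exact Loc.S_inv_mem hs
  · exact hx
  · exact hs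

lemma S_sub_Dset {s : L} (hs : s ∈ Loc.S) : Loc.S ⊆ Loc.toPartialGroup.Dset s := by
  intro x hx
  apply Loc.S_word_mem
  intro z hz
  simp only [List.mem_cons, List.not_mem_nil, or_false] at hz
  rcases hz with rfl | rfl | rfl
  · exact Loc.S_inv_mem hs
  · exact hx
  · exact hs

lemma conj_one_S {s : L} (_hs : s ∈ Loc.S) :
    Loc.toPartialGroup.conj s Loc.toPartialGroup.one = Loc.toPartialGroup.one := by
  set PG := Loc.toPartialGroup
  have h1 : [PG.inv s, s] ∈ PG.D := (PG.inv_self s).1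
  have h2 := PG.prod_assoc [PG.inv s] [] [s] (by simpa using h1)
  have e : PG.prod [PG.inv s, PG.one, s] = PG.prod [PG.inv s, s] := by
    simpa [PartialGroup.one] using h2.2.symm
  rw [PartialGroup.conj, e, (PG.inv_self s).2]

lemma conj_pair {s x y : L} (hs : s ∈ Loc.S) (hx : x ∈ Loc.S) (hy : y ∈ Loc.S) :
    Loc.toPartialGroup.conj s (Loc.toPartialGroup.prod [x, y]) =
      Loc.toPartialGroup.prod [Loc.toPartialGroup.conj s x, Loc.toPartialGroup.conj s y] := by
  set PG := Loc.toPartialGroup with hPG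
  set a := PG.inv s with ha
  have haS : a ∈ Loc.S := Loc.S_inv_mem hs
  have hw6 : [a, x, s, a, y, s] ∈ PG.D := by
    apply Loc.S_word_mem
    intro z hz
    simp only [List.mem_cons, List.not_mem_nil, or_false] at hz
    rcases hz with rfl | rfl | rfl | rfl | rfl | rfl <;> assumption
  -- path 1
  have p1 := PG.prod_assoc [a, x] [s, a] [y, s] (by simpa using hw6)
  have es : PG.prod [s, a] = PG.one := (PG.self_inv s).2
  have p1' : [a, x, PG.one, y, s] ∈ PG.D := by
    have := p1.1; rw [es] at this; simpa using this
  have e1 : PG.prod [a, x, s, a, y, s] = PG.prod [a, x, PG.one, y, s] := by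
    have := p1.2; rw [es] at this; simpa using this
  have p2 := PG.prod_assoc [a] [x, PG.one] [y, s] (by simpa using p1')
  have ex : PG.prod [x, PG.one] = x := (PG.cons_one x).2
  have p2' : [a, x, y, s] ∈ PG.D := by
    have := p2.1; rw [ex] at this; simpa using this
  have e2 : PG.prod [a, x, PG.one, y, s] = PG.prod [a, x, y, s] := by
    have := p2.2; rw [ex] at this; simpa using this
  have p3 := PG.prod_assoc [a] [x, y] [s] (by simpa using p2')
  have e3 : PG.prod [a, x, y, s] = PG.prod [a, PG.prod [x, y], s] := by simpa using p3.2
  -- path 2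
  have q1 := PG.prod_assoc [] [a, x, s] [a, y, s] (by simpa using hw6)
  have f1 : PG.prod [a, x, s, a, y, s] = PG.prod [PG.prod [a, x, s], a, y, s] := by
    simpa using q1.2
  have q1' : [PG.prod [a, x, s], a, y, s] ∈ PG.D := by simpa using q1.1
  have q2 := PG.prod_assoc [PG.prod [a, x, s]] [a, y, s] [] (by simpa using q1')
  have f2 : PG.prod [PG.prod [a, x, s], a, y, s] =
      PG.prod [PG.prod [a, x, s], PG.prod [a, y, s]] := by simpa using q2.2
  show PG.prod [a, PG.prod [x, y], s] = PG.prod [PG.prod [a, x, s], PG.prod [a, y, s]]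
  rw [← e3, ← e2, ← e1, f1, f2]

lemma conj_prod_map {s : L} (hs : s ∈ Loc.S) :
    ∀ xs : List L, (∀ x ∈ xs, x ∈ Loc.S) →
      Loc.toPartialGroup.conj s (Loc.toPartialGroup.prod xs) =
        Loc.toPartialGroup.prod (xs.map (Loc.toPartialGroup.conj s)) := by
  set PG := Loc.toPartialGroup
  intro xs
  induction xs with
  | nil => intro _; simpa [PartialGroup.one] using Loc.conj_one_S hs
  | cons x xs ih =>
    intro hmem
    have hx : x ∈ Loc.S := hmem x (by simp)
    have hxs : ∀ z ∈ xs, z ∈ Loc.S := fun z hz => hmem z (by simp [hz])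
    have hcons : (x :: xs) ∈ PG.D := Loc.S_word_mem (by
      intro z hz; rcases List.mem_cons.mp hz with rfl | h
      · exact hx
      · exact hxs z h)
    have hsp := PG.split_prod (u := [x]) (v := xs) (by simpa using hcons)
    have hPxs : PG.prod xs ∈ Loc.S := Loc.S_prod_mem hxs
    have e1 : PG.prod (x :: xs) = PG.prod [x, PG.prod xs] := by
      have := hsp.2; rw [PG.prod_single] at this; simpa using this
    have e2 := Loc.conj_pair hs hx hPxs
    have hcs : ∀ z ∈ xs.map (PG.conj s), z ∈ Loc.S := by
      intro z hz
      rcases List.mem_map.mp hz with ⟨w, hw, rfl⟩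
      exact Loc.conj_mem_S hs (hxs w hw)
    have hcons' : (PG.conj s x :: xs.map (PG.conj s)) ∈ PG.D := Loc.S_word_mem (by
      intro z hz; rcases List.mem_cons.mp hz with rfl | h
      · exact Loc.conj_mem_S hs hx
      · exact hcs z h)
    have hsp' := PG.split_prod (u := [PG.conj s x]) (v := xs.map (PG.conj s))
      (by simpa using hcons')
    have e3 : PG.prod (PG.conj s x :: xs.map (PG.conj s)) =
        PG.prod [PG.conj s x, PG.prod (xs.map (PG.conj s))] := by
      have := hsp'.2; rw [PG.prod_single] at this; simpa using this
    rw [e1, e2, ih hxs, List.map_cons, e3]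

lemma conj_inv_S {s x : L} (hs : s ∈ Loc.S) (hx : x ∈ Loc.S) :
    Loc.toPartialGroup.inv (Loc.toPartialGroup.conj s x) =
      Loc.toPartialGroup.conj s (Loc.toPartialGroup.inv x) := by
  set PG := Loc.toPartialGroup
  have hw : [PG.inv s, x, s] ∈ PG.D := Loc.S_sub_Dset hs hx
  have h := PG.inv_prod hw
  show PG.inv (PG.prod [PG.inv s, x, s]) = PG.prod [PG.inv s, PG.inv x, s]
  rw [h]
  simp [PG.inv_inv]

lemma conjSet_isSubgroup {s : L} (hs : s ∈ Loc.S) {P : Set L} (hPS : P ⊆ Loc.S)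
    (hP : Loc.toPartialGroup.IsSubgroup P) :
    Loc.toPartialGroup.IsSubgroup (Loc.toPartialGroup.conjSet s P) ∧
      Loc.toPartialGroup.conjSet s P ⊆ Loc.S := by
  set PG := Loc.toPartialGroup
  have himg : PG.conjSet s P ⊆ Loc.S := by
    rintro _ ⟨x, hx, rfl⟩
    exact Loc.conj_mem_S hs (hPS hx)
  refine ⟨⟨⟨?_, ?_, ?_⟩, ?_⟩, himg⟩
  · rcases hP.1.1 with ⟨x, hx⟩
    exact ⟨PG.conj s x, ⟨x, hx, rfl⟩⟩
  · rintro _ ⟨x, hx, rfl⟩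
    refine ⟨PG.inv x, hP.1.2.1 x hx, ?_⟩
    exact (Loc.conj_inv_S hs (hPS hx)).symm
  · intro v _ hv
    obtain ⟨xs, hxs, rfl⟩ := list_map_surj (PG.conj s) P v hv
    have hxsS : ∀ x ∈ xs, x ∈ Loc.S := fun x hx => hPS (hxs x hx)
    have e := (Loc.conj_prod_map hs xs hxsS).symm
    rw [e]
    exact ⟨PG.prod xs, hP.1.2.2 xs (Loc.S_word_mem hxsS) hxs, rfl⟩
  · intro w hw
    apply Loc.S_word_mem
    intro x hx
    exact himg (hw x hx)

lemma conjSet_mem_Delta {P : Set L} (hP : P ∈ Loc.Δ) {s : L} (hs : s ∈ Loc.S) :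
    Loc.toPartialGroup.conjSet s P ∈ Loc.Δ := by
  obtain ⟨hPS, hPsub⟩ := Loc.Δ_subgroups P hP
  have h := Loc.conjSet_isSubgroup hs hPS hPsub
  exact Loc.L3 _ h.2 h.1 ⟨P, hP, s, fun x hx => Loc.S_sub_Dset hs (hPS hx), subset_rfl⟩

lemma four_mem {k g r : L} (hkg : [k, g] ∈ Loc.toPartialGroup.D) (hr : r ∈ Loc.S) :
    [k, g, Loc.toPartialGroup.inv r, r] ∈ Loc.toPartialGroup.D := by
  set PG := Loc.toPartialGroup with hPGdef
  have hir : PG.inv r ∈ Loc.S := Loc.S_inv_mem hr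
  obtain ⟨P, hPΔ, hstep⟩ := (Loc.L2 [k, g]).mp hkg
  have h0 := hstep ⟨0, by norm_num⟩
  have h1 := hstep ⟨1, by norm_num⟩
  set P0 : Set L := P ⟨0, by norm_num⟩ with hP0
  set P1 : Set L := P ⟨1, by norm_num⟩ with hP1
  set P2 : Set L := P ⟨2, by norm_num⟩ with hP2
  have hd0 : P0 ⊆ PG.Dset k := h0.1
  have hc0 : PG.conjSet k P0 = P1 := h0.2
  have hd1 : P1 ⊆ PG.Dset g := h1.1
  have hc1 : PG.conjSet g P1 = P2 := h1.2
  have hP0Δ : P0 ∈ Loc.Δ := hPΔ _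
  have hP1Δ : P1 ∈ Loc.Δ := hPΔ _
  have hP2Δ : P2 ∈ Loc.Δ := hPΔ _
  set Q3 : Set L := PG.conjSet (PG.inv r) P2 with hQ3
  set Q4 : Set L := PG.conjSet r Q3 with hQ4
  have hQ3Δ : Q3 ∈ Loc.Δ := Loc.conjSet_mem_Delta hP2Δ hir
  have hQ4Δ : Q4 ∈ Loc.Δ := Loc.conjSet_mem_Delta hQ3Δ hr
  apply (Loc.L2 [k, g, PG.inv r, r]).mpr
  refine ⟨fun i => [P0, P1, P2, Q3, Q4].get ⟨i.val, by simp only [List.length_cons, List.length_nil]; omega⟩, ?_, ?_⟩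
  · intro i
    fin_cases i <;> simpa using by assumption
  · intro i
    fin_cases i
    · exact ⟨hd0, hc0⟩
    · exact ⟨hd1, hc1⟩
    · exact ⟨fun x hx => Loc.S_sub_Dset hir ((Loc.Δ_subgroups P2 hP2Δ).1 hx), rfl⟩
    · exact ⟨fun x hx => Loc.S_sub_Dset hr ((Loc.Δ_subgroups Q3 hQ3Δ).1 hx), rfl⟩

lemma key {K : Set L} (hK : Loc.toPartialGroup.IsPartialSubgroup K) {g k k₂ : L}
    (hk : k ∈ K) (hk2 : k₂ ∈ K) (hkg : [k, g] ∈ Loc.toPartialGroup.D)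
    (hk2g : [k₂, g] ∈ Loc.toPartialGroup.D)
    (hr : Loc.toPartialGroup.prod [k₂, g] ∈ Loc.S) :
    ∃ k' ∈ K, [k', Loc.toPartialGroup.prod [k₂, g]] ∈ Loc.toPartialGroup.D ∧
      Loc.toPartialGroup.prod [k, g] =
        Loc.toPartialGroup.prod [k', Loc.toPartialGroup.prod [k₂, g]] := by
  set PG := Loc.toPartialGroup with hPGdef
  set r : L := PG.prod [k₂, g] with hrdef
  set ir : L := PG.inv r with hirdef
  have hw4 : [k, g, ir, r] ∈ PG.D := Loc.four_mem hkg hr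
  -- y = g * r⁻¹ equals k₂⁻¹
  have h_gir_r : [g, ir, r] ∈ PG.D := (PG.append_closed [k] [g, ir, r] hw4).2
  have h_gir : [g, ir] ∈ PG.D := (PG.append_closed [g, ir] [r] h_gir_r).1
  set y : L := PG.prod [g, ir] with hydef
  have hinvr : ir = PG.prod [PG.inv g, PG.inv k₂] := by
    have h := PG.inv_prod hk2g
    simpa using h
  have habar := PG.append_bar_mem hk2g
  have hbar4 : [k₂, g, PG.inv g, PG.inv k₂] ∈ PG.D := by
    have := habar.1; simpa using this
  have h3 : [g, PG.inv g, PG.inv k₂] ∈ PG.D :=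
    (PG.append_closed [k₂] [g, PG.inv g, PG.inv k₂] hbar4).2
  have hA := PG.prod_assoc [g] [PG.inv g, PG.inv k₂] [] (by simpa using h3)
  have hB := PG.prod_assoc [] [g, PG.inv g] [PG.inv k₂] (by simpa using h3)
  have eA : PG.prod [g, PG.inv g, PG.inv k₂] = y := by
    have := hA.2
    simp only [List.cons_append, List.nil_append, List.append_nil] at this
    rw [this, hydef, hinvr]
  have eB : PG.prod [g, PG.inv g, PG.inv k₂] = PG.inv k₂ := by
    have := hB.2
    simp only [List.cons_append, List.nil_append, List.append_nil] at this
    rw [this, (PG.self_inv g).2, (PG.one_cons (PG.inv k₂)).2]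
  have hyk : y = PG.inv k₂ := by rw [← eA, eB]
  have hyK : y ∈ K := hyk ▸ hK.2.1 k₂ hk2
  -- regroup [k, g, ir, r] as [k, y, r] and then [k', r]
  have hC := PG.prod_assoc [k] [g, ir] [r] (by simpa using hw4)
  have hkyr : [k, y, r] ∈ PG.D := by simpa using hC.1
  have e1 : PG.prod [k, g, ir, r] = PG.prod [k, y, r] := by simpa using hC.2
  have hky : [k, y] ∈ PG.D := (PG.append_closed [k, y] [r] (by simpa using hkyr)).1
  set k' : L := PG.prod [k, y] with hk'def
  have hk'K : k' ∈ K := hK.2.2 [k, y] hky (by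
    intro x hx
    rcases List.mem_cons.mp hx with rfl | hx'
    · exact hk
    · rcases List.mem_cons.mp hx' with rfl | hx''
      · exact hyK
      · simp at hx'')
  have hD := PG.prod_assoc [] [k, y] [r] (by simpa using hkyr)
  have hk'r : [k', r] ∈ PG.D := by simpa using hD.1
  have e2 : PG.prod [k, y, r] = PG.prod [k', r] := by simpa using hD.2
  -- prod [k, g, ir, r] = prod [k, g]
  have hE := PG.prod_assoc [k, g] [ir, r] [] (by simpa using hw4)
  have e3 : PG.prod [k, g, ir, r] = PG.prod [k, g, PG.one] := by
    have := hE.2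
    simp only [List.cons_append, List.nil_append, List.append_nil] at this
    rw [this, (PG.inv_self r).2]
  have hkg1 : [k, g, PG.one] ∈ PG.D := by
    have := hE.1
    simp only [List.cons_append, List.nil_append, List.append_nil] at this
    rw [(PG.inv_self r).2] at this
    exact this
  have hF := PG.prod_assoc [k] [g, PG.one] [] (by simpa using hkg1)
  have e4 : PG.prod [k, g, PG.one] = PG.prod [k, g] := by
    have := hF.2
    simp only [List.cons_append, List.nil_append, List.append_nil] at this
    rw [this, (PG.cons_one g).2]
  exact ⟨k', hk'K, hk'r, by rw [← e2, ← e1, e3, e4]⟩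

end Locality

/-- for a partial normal subgroup `K` of a locality and a subgroup
`R ≤ S`, the full preimage of `R̄` under the quotient map `L → L/K` (i.e. the set of
`f ∈ L` lying in the same maximal coset of `K` as some element of `R`) equals `KR`. -/
theorem preimage_of_subgroup_eq_KR {L : Type u} (Loc : Locality L) (K : Set L)
    (hK : Loc.toPartialGroup.IsPartialNormal K) (R : Set L)
    (hRS : R ⊆ Loc.S) (hR : Loc.toPartialGroup.IsSubgroup R) :
    {f : L | ∃ r ∈ R, Loc.toPartialGroup.SameMaxCoset K f r} =
      Loc.toPartialGroup.setProd K R := by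
  set PG := Loc.toPartialGroup with hPGdef
  haveI : Finite L := Loc.finite
  ext f
  simp only [Set.mem_setOf_eq]
  constructor
  · rintro ⟨r, hrR, C, hC, hfC, hrC⟩
    obtain ⟨g, rfl⟩ := hC.1
    obtain ⟨k, hkK, hkg, hf⟩ := hfC
    obtain ⟨k₂, hk2K, hk2g, hre⟩ := hrC
    have hrS : PG.prod [k₂, g] ∈ Loc.S := by rw [← hre]; exact hRS hrR
    obtain ⟨k', hk'K, hk'r, heq⟩ := Loc.key hK.1 hkK hk2K hkg hk2g hrS
    refine ⟨k', hk'K, r, hrR, ?_, ?_⟩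
    · rw [hre]; exact hk'r
    · rw [hf, heq, ← hre]
  · rintro ⟨m, hm, n, hn, hD, rfl⟩
    refine ⟨n, hn, ?_⟩
    have hone : PG.one ∈ K := PG.one_mem_of_partialSub hK.1
    have hnC : n ∈ PG.coset K n := ⟨PG.one, hone, (PG.one_cons n).1, (PG.one_cons n).2.symm⟩
    have hzC : PG.prod [m, n] ∈ PG.coset K n := ⟨m, hm, hD, rfl⟩
    set F : Set (Set L) := {C | (∃ h, C = PG.coset K h) ∧ PG.coset K n ⊆ C} with hF
    have hne : F.Nonempty := ⟨PG.coset K n, ⟨n, rfl⟩, subset_rfl⟩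
    have hfin : F.Finite := Set.toFinite F
    obtain ⟨C, hCF, hmax⟩ := Set.Finite.exists_maximalFor id F hfin hne
    obtain ⟨h0, hCh⟩ := hCF.1
    refine ⟨C, ⟨⟨h0, hCh⟩, ?_⟩, hCF.2 hzC, hCF.2 hnC⟩
    intro g' hsub
    exact Set.Subset.antisymm hsub (hmax (j := PG.coset K g') ⟨⟨g', rfl⟩, hCF.2.trans hsub⟩ hsub)
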